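/- Let S(z) = s(z)/(z*r(z)) where r, s are the roots (with r(0-expansion the one with r ~ 1/z) of z*u^2 - u + z^2 - z + 1 = 0. Then S(z) = (z^2 - z + 1) * C(z(1-z+z^2))^2, where C is the Catalan generating function. Consequently S(z) = (T(z) - 1)/z where T(z) = C(z(1-z+z^2)); i.e., the number of valley-less Motzkin paths with air pockets of length n equals the number of peak-less Motzkin paths with air pockets of length n+1. -/

import Mathlib

/-- The Catalan generating function `C(x) = (1 - sqrt(1-4x))/(2x)`. -/
noncomputable def catalanGF (x : ℝ) : ℝ :=
  if x = 0 then 1 else (1 - Real.sqrt (1 - 4*x)) / (2*x)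

/-- With `r, s` the roots of `z u^2 - u + z^2 - z + 1 = 0`, the generating function
`S(z) = s(z)/(z r(z))` of valley-less Motzkin paths with air pockets satisfies
`S(z) = (z^2 - z + 1) C(z(1-z+z^2))^2` and `S(z) = (T(z) - 1)/z` where
`T(z) = C(z(1-z+z^2))` counts peak-less Motzkin paths with air pockets. -/
theorem valleyless_gf (z : ℝ) (hz : z ≠ 0)
    (hΔ : 0 ≤ 1 - 4*z + 4*z^2 - 4*z^3)
    (r s : ℝ)
    (hr : r = (1 + Real.sqrt (1 - 4*z + 4*z^2 - 4*z^3)) / (2*z))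
    (hs : s = (1 - Real.sqrt (1 - 4*z + 4*z^2 - 4*z^3)) / (2*z)) :
    s / (z * r) = (z^2 - z + 1) * (catalanGF (z * (1 - z + z^2)))^2 ∧
    s / (z * r) = (catalanGF (z * (1 - z + z^2)) - 1) / z := by
  have hpos : (0:ℝ) < 1 - z + z^2 := by nlinarith [sq_nonneg (z - 1)]
  have hw : z * (1 - z + z^2) ≠ 0 := mul_ne_zero hz (by positivity)
  set q := Real.sqrt (1 - 4*z + 4*z^2 - 4*z^3) with hqdef
  have hq0 : 0 ≤ q := Real.sqrt_nonneg _
  have hq2 : q^2 = 1 - 4*z + 4*z^2 - 4*z^3 := Real.sq_sqrt hΔ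
  have hC : catalanGF (z * (1 - z + z^2)) = (1 - q) / (2 * (z * (1 - z + z^2))) := by
    rw [catalanGF, if_neg hw, hqdef]
    congr 2
    ring
  have hrne : r ≠ 0 := by
    rw [hr]
    apply div_ne_zero (by linarith) (by simpa using hz)
  subst hr hs
  rw [hC]
  have h1q : (1 + q) * (1 - q) = 4*z - 4*z^2 + 4*z^3 := by nlinarith [hq2]
  constructor
  · rw [div_eq_iff (mul_ne_zero hz hrne), div_eq_iff (by simpa using hz)] at *
    field_simp
    linear_combination (-2*z^2*(1-z+z^2)*(1-q) + (q-1)*(1 - z - z^2 + 2*z^3 - 2*z^4)) * h1q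
  · rw [div_eq_iff (mul_ne_zero hz hrne)]
    field_simp
    nlinarith [hq2]
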